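/- For all real z > 0 and all real ν > 1/2, one has I_ν(z) < (z/2)^ν · (1/√(2e)) · (e/(ν + 1/2))^{ν + 1/2} · (e^z + e^{−z})/2. -/

import Mathlib

/-- The modified Bessel function of the first kind of order `ν`, defined for `z > 0` by
`I_ν(z) = ∑_{k=0}^∞ (1/(k! Γ(ν+k+1))) (z/2)^(ν+2k)`. -/
noncomputable def besselI (ν z : ℝ) : ℝ :=
  ∑' k : ℕ, (1 / (k.factorial * Real.Gamma (ν + (k : ℝ) + 1))) * (z / 2) ^ (ν + 2 * (k : ℝ))

set_option maxRecDepth 100000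
set_option maxHeartbeats 1000000

open Real Filter Set

/-- auxiliary concave summand -/
noncomputable def besselH (u : ℝ) : ℝ :=
  (u + 1/2) * Real.log (u + 1/2) - (u - 1/2) * Real.log (u - 1/2) - Real.log u

lemma besselH_deriv1 {u : ℝ} (hu : 3/4 < u) :
    HasDerivAt besselH (Real.log (u + 1/2) - Real.log (u - 1/2) - u⁻¹) u := by
  have h0 : u ≠ 0 := by linarith
  have h1 : u + 1/2 ≠ 0 := by linarith
  have h2 : u - 1/2 ≠ 0 := by linarith
  have p1 : HasDerivAt (fun u : ℝ => u + 1/2) 1 u := (hasDerivAt_id u).add_const _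
  have p2 : HasDerivAt (fun u : ℝ => u - 1/2) 1 u := (hasDerivAt_id u).sub_const _
  have m1 := p1.mul (p1.log h1)
  have m2 := p2.mul (p2.log h2)
  have e1 : (u + 1/2) * (1 / (u + 1/2)) = 1 := by rw [mul_one_div, div_self h1]
  have e2 : (u - 1/2) * (1 / (u - 1/2)) = 1 := by rw [mul_one_div, div_self h2]
  have := (m1.sub m2).sub (Real.hasDerivAt_log h0)
  refine this.congr_deriv ?_
  rw [e1, e2]; ring

lemma besselH_deriv2 {u : ℝ} (hu : 3/4 < u) :
    HasDerivAt (fun u : ℝ => Real.log (u + 1/2) - Real.log (u - 1/2) - u⁻¹)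
      ((u + 1/2)⁻¹ - (u - 1/2)⁻¹ + (u^2)⁻¹) u := by
  have h0 : u ≠ 0 := by linarith
  have h1 : u + 1/2 ≠ 0 := by linarith
  have h2 : u - 1/2 ≠ 0 := by linarith
  have p1 : HasDerivAt (fun u : ℝ => u + 1/2) 1 u := (hasDerivAt_id u).add_const _
  have p2 : HasDerivAt (fun u : ℝ => u - 1/2) 1 u := (hasDerivAt_id u).sub_const _
  have := ((p1.log h1).sub (p2.log h2)).sub (hasDerivAt_inv h0)
  refine this.congr_deriv ?_
  field_simp
  ring

lemma besselH_concave {t : ℝ} (ht : 0 ≤ t) :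
    ConcaveOn ℝ (Set.Icc (3/2 : ℝ) (5/2)) (fun x => besselH (x + t)) := by
  have hgt : ∀ x ∈ Set.Icc (3/2 : ℝ) (5/2), 3/4 < x + t := by
    intro x hx; have := hx.1; simp only [Set.mem_Icc] at hx ⊢; linarith [hx.1]
  refine concaveOn_of_hasDerivWithinAt2_nonpos (convex_Icc _ _)
    (f' := fun x => Real.log (x + t + 1/2) - Real.log (x + t - 1/2) - (x + t)⁻¹)
    (f'' := fun x => ((x + t + 1/2)⁻¹ - (x + t - 1/2)⁻¹ + ((x + t)^2)⁻¹)) ?_ ?_ ?_ ?_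
  · intro x hx
    exact ((besselH_deriv1 (hgt x hx)).comp_add_const x t).continuousAt.continuousWithinAt
  · intro x hx
    have hx' := interior_subset hx
    exact ((besselH_deriv1 (hgt x hx')).comp_add_const x t).hasDerivWithinAt
  · intro x hx
    have hx' := interior_subset hx
    exact ((besselH_deriv2 (hgt x hx')).comp_add_const x t).hasDerivWithinAt
  · intro x hx
    have hx' := interior_subset hx
    have h := hgt x hx'
    have h1 : (0:ℝ) < x + t - 1/2 := by linarith
    have h2 : (0:ℝ) < x + t + 1/2 := by linarith
    have key : (x + t + 1/2)⁻¹ - (x + t - 1/2)⁻¹ + ((x + t)^2)⁻¹ ≤ 0 := by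
      rw [sub_add_eq_add_sub, sub_nonpos]
      rw [inv_add_inv h2.ne' (by positivity : ((x+t)^2 : ℝ) ≠ 0), inv_eq_one_div,
        div_le_div_iff₀ (by positivity) h1]
      nlinarith
    exact key


/-- the concave comparison function -/
noncomputable def besselD (x : ℝ) : ℝ :=
  (x * Real.log 256 + Real.log (Nat.factorial 256 : ℝ) + x - 1/2 - (1 + Real.log 2)/2)
  + (∑ k ∈ Finset.range 257, besselH (x + k))
  + (-((x + 513/2) * Real.log (x + 513/2)))

lemma besselNegMulLog_concave {a : ℝ} (ha : 0 ≤ a) :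
    ConcaveOn ℝ (Set.Icc (3/2 : ℝ) (5/2)) (fun x => -((x + a) * Real.log (x + a))) := by
  have hgt : ∀ x ∈ Set.Icc (3/2 : ℝ) (5/2), (0:ℝ) < x + a := by
    intro x hx; simp only [Set.mem_Icc] at hx; linarith [hx.1]
  have d1 : ∀ u : ℝ, 0 < u → HasDerivAt (fun u : ℝ => -(u * Real.log u)) (-(Real.log u + 1)) u := by
    intro u hu
    have := ((hasDerivAt_id u).mul (Real.hasDerivAt_log hu.ne')).neg
    refine this.congr_deriv ?_
    simp only [id]
    field_simp
  have d2 : ∀ u : ℝ, 0 < u → HasDerivAt (fun u : ℝ => -(Real.log u + 1)) (-u⁻¹) u := by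
    intro u hu
    exact ((Real.hasDerivAt_log hu.ne').add_const 1).neg
  refine concaveOn_of_hasDerivWithinAt2_nonpos (convex_Icc _ _)
    (f' := fun x => -(Real.log (x + a) + 1)) (f'' := fun x => -(x + a)⁻¹) ?_ ?_ ?_ ?_
  · intro x hx
    exact ((d1 _ (hgt x hx)).comp_add_const x a).continuousAt.continuousWithinAt
  · intro x hx
    exact ((d1 _ (hgt x (interior_subset hx))).comp_add_const x a).hasDerivWithinAt
  · intro x hx
    exact ((d2 _ (hgt x (interior_subset hx))).comp_add_const x a).hasDerivWithinAt
  · intro x hx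
    have := hgt x (interior_subset hx)
    simp only [neg_nonpos]
    positivity

lemma besselD_concave : ConcaveOn ℝ (Set.Icc (3/2 : ℝ) (5/2)) besselD := by
  have hlin : ConcaveOn ℝ (Set.Icc (3/2 : ℝ) (5/2))
      (fun x : ℝ => x * Real.log 256 + Real.log (Nat.factorial 256 : ℝ) + x - 1/2
        - (1 + Real.log 2)/2) := by
    refine ⟨convex_Icc _ _, ?_⟩
    intro x _ y _ a b ha hb hab
    have hb' : b = 1 - a := by linarith
    subst hb'
    simp only [smul_eq_mul]
    apply le_of_eq
    ring
  have hsum : ∀ m : ℕ, ConcaveOn ℝ (Set.Icc (3/2 : ℝ) (5/2))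
      (fun x : ℝ => ∑ k ∈ Finset.range m, besselH (x + k)) := by
    intro m
    induction m with
    | zero => simpa using concaveOn_const (0:ℝ) (convex_Icc _ _)
    | succ m ih =>
      have hc := besselH_concave (t := (m:ℝ)) (Nat.cast_nonneg m)
      have := ih.add hc
      convert this using 1
      · rfl
      funext x
      rw [Finset.sum_range_succ]
      rfl
  have := (hlin.add (hsum 257)).add (besselNegMulLog_concave (by norm_num : (0:ℝ) ≤ 513/2))
  exact this

lemma besselD_eq {x : ℝ} (hx : 1/2 < x) :
    besselD x = Real.log (Real.GammaSeq x 256)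
      - ((1 + Real.log 2)/2 + (x - 1/2) * Real.log (x - 1/2) - (x - 1/2)) := by
  have tele := Finset.sum_range_sub (f := fun k : ℕ => (x + k - 1/2) * Real.log (x + k - 1/2)) 257
  push_cast at tele
  have hsum : ∑ k ∈ Finset.range 257, besselH (x + k)
      = ((x + 257 - 1/2) * Real.log (x + 257 - 1/2) - (x + 0 - 1/2) * Real.log (x + 0 - 1/2))
        - ∑ k ∈ Finset.range 257, Real.log (x + k) := by
    rw [← tele, ← Finset.sum_sub_distrib]
    apply Finset.sum_congr rfl
    intro k _
    simp only [besselH]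
    ring_nf
  have hlogG : Real.log (Real.GammaSeq x 256)
      = x * Real.log 256 + Real.log (Nat.factorial 256 : ℝ)
        - ∑ k ∈ Finset.range 257, Real.log (x + k) := by
    unfold Real.GammaSeq
    rw [Real.log_div (by positivity) ?_, Real.log_mul (by positivity) (by positivity),
      Real.log_rpow (by norm_num), Real.log_prod]
    · norm_num
    · intro j _
      have : (0:ℝ) ≤ j := Nat.cast_nonneg j
      positivity
    · apply Finset.prod_ne_zero_iff.2
      intro j _
      have : (0:ℝ) ≤ j := Nat.cast_nonneg j
      positivity
  unfold besselD
  rw [hsum, hlogG]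
  have e3 : x + 513/2 = x + 257 - 1/2 := by ring
  rw [e3]
  ring

lemma besselGammaSeq_pos {x : ℝ} (hx : 0 < x) (n : ℕ) (hn : 0 < n) :
    0 < Real.GammaSeq x n := by
  unfold Real.GammaSeq
  have hp : ∀ j ∈ Finset.range (n+1), (0:ℝ) < x + j := by
    intro j _
    have : (0:ℝ) ≤ j := Nat.cast_nonneg j
    linarith
  have := Finset.prod_pos hp
  have hf : (0:ℝ) < (Nat.factorial n : ℝ) := by positivity
  have hr : (0:ℝ) < (n:ℝ) ^ x := Real.rpow_pos_of_pos (by exact_mod_cast hn) x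
  positivity

lemma besselGammaSeq_mono {s : ℝ} (hs : 1 ≤ s) {n : ℕ} (hn : 1 ≤ n) :
    Real.GammaSeq s n ≤ Real.GammaSeq s (n + 1) := by
  have hn0 : (0:ℝ) < n := by exact_mod_cast hn
  have hprod : (0:ℝ) < ∏ j ∈ Finset.range (n+1), (s + j) := by
    apply Finset.prod_pos
    intro j _
    have : (0:ℝ) ≤ j := Nat.cast_nonneg j
    linarith
  unfold Real.GammaSeq
  rw [Finset.prod_range_succ (f := fun j : ℕ => (s + j)) (n+1)]
  rw [div_le_div_iff₀ hprod (by positivity)]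
  push_cast [Nat.factorial_succ]
  -- goal : n^s * n! * (prod * (s + (n+1))) ≤ (n+1)^s * ((n+1) * n!) * prod
  have key : (n:ℝ)^s * (s + (n+1)) ≤ ((n:ℝ)+1)^s * (n+1) := by
    have hb : 1 + s * (1/n) ≤ (1 + 1/n) ^ s := by
      have hm0 : (0:ℝ) ≤ 1/(n:ℝ) := by positivity
      have hm1 : (-1:ℝ) ≤ 1/(n:ℝ) := le_trans (by norm_num) hm0
      exact one_add_mul_self_le_rpow_one_add hm1 hs
    have h1n : ((n:ℝ)+1)^s = (n:ℝ)^s * (1 + 1/n)^s := by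
      rw [← Real.mul_rpow (by positivity) (by positivity)]
      congr 1
      field_simp
    rw [h1n]
    have h2 : (n:ℝ)^s * ((1 + s * (1/n)) * (n+1)) ≤ (n:ℝ)^s * ((1 + 1/n)^s * (n+1)) := by
      apply mul_le_mul_of_nonneg_left _ (by positivity)
      apply mul_le_mul_of_nonneg_right hb (by positivity)
    calc (n:ℝ)^s * (s + (n+1)) ≤ (n:ℝ)^s * ((1 + s * (1/n)) * (n+1)) := by
          apply mul_le_mul_of_nonneg_left _ (by positivity)
          have h3 : s * (1/n) * n = s := by field_simp
          have h4 : (0:ℝ) ≤ s * (1/n) := by positivity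
          nlinarith [h4, hs]
      _ ≤ (n:ℝ)^s * ((1 + 1/n)^s * (n+1)) := h2
      _ = (n:ℝ)^s * (1+1/n)^s * (n+1) := by ring
  have hfp : (0:ℝ) < (Nat.factorial n : ℝ) := by positivity
  calc (n:ℝ)^s * (Nat.factorial n : ℝ) * (( ∏ j ∈ Finset.range (n+1), (s + j)) * (s + (n+1)))
      = ((n:ℝ)^s * (s + (n+1))) * ((Nat.factorial n : ℝ) * ∏ j ∈ Finset.range (n+1), (s + j)) := by ring
    _ ≤ (((n:ℝ)+1)^s * (n+1)) * ((Nat.factorial n : ℝ) * ∏ j ∈ Finset.range (n+1), (s + j)) := by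
        apply mul_le_mul_of_nonneg_right key
        positivity
    _ = ((n:ℝ)+1)^s * (((n:ℝ)+1) * (Nat.factorial n : ℝ)) * ∏ j ∈ Finset.range (n+1), (s + j) := by ring

lemma besselGammaSeq_le_Gamma {s : ℝ} (hs : 1 ≤ s) :
    Real.GammaSeq s 256 ≤ Real.Gamma s := by
  have key : ∀ m, 256 ≤ m → Real.GammaSeq s 256 ≤ Real.GammaSeq s m := by
    intro m hm
    induction m, hm using Nat.le_induction with
    | base => exact le_refl _
    | succ m hm ih => exact ih.trans (besselGammaSeq_mono hs (by omega))
  exact ge_of_tendsto (Real.GammaSeq_tendsto_Gamma s)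
    (Filter.eventually_atTop.2 ⟨256, key⟩)

lemma besselFact256 : Nat.factorial 256 = 857817775342842654119082271681232625157781520279485619859655650377269452553147589377440291360451408450375885342336584306157196834693696475322289288497426025679637332563368786442675207626794560187968867971521143307702077526646451464709187326100832876325702818980773671781454170250523018608495319068138257481070252817559459476987034665712738139286205234756808218860701203611083152093501947437109101726968262861606263662435022840944191408424615936000000000000000000000000000000000000000000000000000000000000000 := by decide
lemma besselQ3 : (∏ j ∈ Finset.range 257, (3+2*j)) = 924893119583260675511489534422644213301837914642330167937562293492813855316593973897339352035372021669393442354747072577113630514685043046804409613362893715631118301039785484491248455293299711454773252519785000195217511344073831511356783101073230462944020367612279412271007687894911508051913733355478180715889926188808271371490888072900944126312075028241217217599404375319156197108711901322562327770078517787846204590661625594923039707498321485874609746192521070210796938808622509989291242215545453514710452279007247687495449704404895051732678440230273064770472046802751719951629638671875 := by decide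
lemma besselQ5 : (∏ j ∈ Finset.range 257, (5+2*j)) = 159389914274848589746480029765502352759016733956694898941239901911928254399559694834974815000762445067692136565801412174122582325364055751732626590036205350327096053879189698493991817128878650274039257184242948366975817788295390297123818954418286716447352843351849485381370324880556416554279800048260739810038363946537958766353596377896596037767780929866903100499630687346667917968401350994588241152376864565438829257790686810858403842925544069399057746260511131099660672454685945888154524075145666489035101276082249018145049165725776913915264917866350391495444682732340879738330841064453125 := by decide

lemma besselGS_eval1 : Real.GammaSeq (3/2 : ℝ) 256
    = 4096 * (857817775342842654119082271681232625157781520279485619859655650377269452553147589377440291360451408450375885342336584306157196834693696475322289288497426025679637332563368786442675207626794560187968867971521143307702077526646451464709187326100832876325702818980773671781454170250523018608495319068138257481070252817559459476987034665712738139286205234756808218860701203611083152093501947437109101726968262861606263662435022840944191408424615936000000000000000000000000000000000000000000000000000000000000000 : ℝ) * 2^257 / (924893119583260675511489534422644213301837914642330167937562293492813855316593973897339352035372021669393442354747072577113630514685043046804409613362893715631118301039785484491248455293299711454773252519785000195217511344073831511356783101073230462944020367612279412271007687894911508051913733355478180715889926188808271371490888072900944126312075028241217217599404375319156197108711901322562327770078517787846204590661625594923039707498321485874609746192521070210796938808622509989291242215545453514710452279007247687495449704404895051732678440230273064770472046802751719951629638671875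 : ℝ) := by
  unfold Real.GammaSeq
  have h256 : ((256:ℕ):ℝ) ^ ((3:ℝ)/2) = 4096 := by
    rw [show ((256:ℕ):ℝ) = (16:ℝ)^(2:ℕ) by norm_num, ← Real.rpow_natCast (16:ℝ) 2,
      ← Real.rpow_mul (by norm_num)]
    rw [show ((2:ℕ):ℝ)*((3:ℝ)/2) = ((3:ℕ):ℝ) by push_cast; norm_num, Real.rpow_natCast]
    norm_num
  have hprod : ∏ j ∈ Finset.range (256+1), ((3:ℝ)/2 + (j:ℕ)) = (924893119583260675511489534422644213301837914642330167937562293492813855316593973897339352035372021669393442354747072577113630514685043046804409613362893715631118301039785484491248455293299711454773252519785000195217511344073831511356783101073230462944020367612279412271007687894911508051913733355478180715889926188808271371490888072900944126312075028241217217599404375319156197108711901322562327770078517787846204590661625594923039707498321485874609746192521070210796938808622509989291242215545453514710452279007247687495449704404895051732678440230273064770472046802751719951629638671875 : ℝ)/2^257 := by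
    rw [Finset.prod_congr rfl (fun j _ => by push_cast; ring :
      ∀ j ∈ Finset.range (256+1), ((3:ℝ)/2 + (j:ℕ)) = ((3+2*j:ℕ):ℝ)/2)]
    rw [Finset.prod_div_distrib, ← Nat.cast_prod, besselQ3]
    norm_num [pow_succ]
  rw [h256, hprod, show ((Nat.factorial 256 : ℕ):ℝ) = (857817775342842654119082271681232625157781520279485619859655650377269452553147589377440291360451408450375885342336584306157196834693696475322289288497426025679637332563368786442675207626794560187968867971521143307702077526646451464709187326100832876325702818980773671781454170250523018608495319068138257481070252817559459476987034665712738139286205234756808218860701203611083152093501947437109101726968262861606263662435022840944191408424615936000000000000000000000000000000000000000000000000000000000000000:ℝ) by rw [besselFact256]; norm_num]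
  rw [div_div_eq_mul_div]

lemma besselGS_eval2 : Real.GammaSeq (5/2 : ℝ) 256
    = 1048576 * (857817775342842654119082271681232625157781520279485619859655650377269452553147589377440291360451408450375885342336584306157196834693696475322289288497426025679637332563368786442675207626794560187968867971521143307702077526646451464709187326100832876325702818980773671781454170250523018608495319068138257481070252817559459476987034665712738139286205234756808218860701203611083152093501947437109101726968262861606263662435022840944191408424615936000000000000000000000000000000000000000000000000000000000000000 : ℝ) * 2^257 / (159389914274848589746480029765502352759016733956694898941239901911928254399559694834974815000762445067692136565801412174122582325364055751732626590036205350327096053879189698493991817128878650274039257184242948366975817788295390297123818954418286716447352843351849485381370324880556416554279800048260739810038363946537958766353596377896596037767780929866903100499630687346667917968401350994588241152376864565438829257790686810858403842925544069399057746260511131099660672454685945888154524075145666489035101276082249018145049165725776913915264917866350391495444682732340879738330841064453125 : ℝ) := by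
  unfold Real.GammaSeq
  have h256 : ((256:ℕ):ℝ) ^ ((5:ℝ)/2) = 1048576 := by
    rw [show ((256:ℕ):ℝ) = (16:ℝ)^(2:ℕ) by norm_num, ← Real.rpow_natCast (16:ℝ) 2,
      ← Real.rpow_mul (by norm_num)]
    rw [show ((2:ℕ):ℝ)*((5:ℝ)/2) = ((5:ℕ):ℝ) by push_cast; norm_num, Real.rpow_natCast]
    norm_num
  have hprod : ∏ j ∈ Finset.range (256+1), ((5:ℝ)/2 + (j:ℕ)) = (159389914274848589746480029765502352759016733956694898941239901911928254399559694834974815000762445067692136565801412174122582325364055751732626590036205350327096053879189698493991817128878650274039257184242948366975817788295390297123818954418286716447352843351849485381370324880556416554279800048260739810038363946537958766353596377896596037767780929866903100499630687346667917968401350994588241152376864565438829257790686810858403842925544069399057746260511131099660672454685945888154524075145666489035101276082249018145049165725776913915264917866350391495444682732340879738330841064453125 : ℝ)/2^257 := by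
    rw [Finset.prod_congr rfl (fun j _ => by push_cast; ring :
      ∀ j ∈ Finset.range (256+1), ((5:ℝ)/2 + (j:ℕ)) = ((5+2*j:ℕ):ℝ)/2)]
    rw [Finset.prod_div_distrib, ← Nat.cast_prod, besselQ5]
    norm_num [pow_succ]
  rw [h256, hprod, show ((Nat.factorial 256 : ℕ):ℝ) = (857817775342842654119082271681232625157781520279485619859655650377269452553147589377440291360451408450375885342336584306157196834693696475322289288497426025679637332563368786442675207626794560187968867971521143307702077526646451464709187326100832876325702818980773671781454170250523018608495319068138257481070252817559459476987034665712738139286205234756808218860701203611083152093501947437109101726968262861606263662435022840944191408424615936000000000000000000000000000000000000000000000000000000000000000:ℝ) by rw [besselFact256]; norm_num]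
  rw [div_div_eq_mul_div]

lemma besselEndpoint1 : Real.exp ((Real.log 2 - 1)/2) < Real.GammaSeq (3/2 : ℝ) 256 := by
  rw [besselGS_eval1]
  set V : ℝ := 4096 * (857817775342842654119082271681232625157781520279485619859655650377269452553147589377440291360451408450375885342336584306157196834693696475322289288497426025679637332563368786442675207626794560187968867971521143307702077526646451464709187326100832876325702818980773671781454170250523018608495319068138257481070252817559459476987034665712738139286205234756808218860701203611083152093501947437109101726968262861606263662435022840944191408424615936000000000000000000000000000000000000000000000000000000000000000 : ℝ) * 2^257 / (924893119583260675511489534422644213301837914642330167937562293492813855316593973897339352035372021669393442354747072577113630514685043046804409613362893715631118301039785484491248455293299711454773252519785000195217511344073831511356783101073230462944020367612279412271007687894911508051913733355478180715889926188808271371490888072900944126312075028241217217599404375319156197108711901322562327770078517787846204590661625594923039707498321485874609746192521070210796938808622509989291242215545453514710452279007247687495449704404895051732678440230273064770472046802751719951629638671875 : ℝ) with hVdef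
  have hV : (0:ℝ) < V := by rw [hVdef]; positivity
  have hsq : Real.exp ((Real.log 2 - 1)/2) ^ 2 = 2 * (Real.exp 1)⁻¹ := by
    rw [sq, ← Real.exp_add, show (Real.log 2 - 1)/2 + (Real.log 2 - 1)/2 = Real.log 2 - 1 by ring,
      Real.exp_sub, Real.exp_log (by norm_num : (0:ℝ) < 2), div_eq_mul_inv]
  refine lt_of_pow_lt_pow_left₀ 2 hV.le ?_
  rw [hsq]
  have he : (2.7182818283:ℝ) < Real.exp 1 := Real.exp_one_gt_d9
  have h1 : (2:ℝ) * (Real.exp 1)⁻¹ < 2 * (2.7182818283:ℝ)⁻¹ := by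
    have := inv_strictAnti₀ (by norm_num : (0:ℝ) < 2.7182818283) he
    linarith
  refine h1.trans_le ?_
  rw [hVdef, div_pow, le_div_iff₀ (by positivity)]
  norm_num [pow_succ]

lemma besselEndpoint2 : Real.exp ((5 * Real.log 2 - 3)/2) < Real.GammaSeq (5/2 : ℝ) 256 := by
  rw [besselGS_eval2]
  set V : ℝ := 1048576 * (857817775342842654119082271681232625157781520279485619859655650377269452553147589377440291360451408450375885342336584306157196834693696475322289288497426025679637332563368786442675207626794560187968867971521143307702077526646451464709187326100832876325702818980773671781454170250523018608495319068138257481070252817559459476987034665712738139286205234756808218860701203611083152093501947437109101726968262861606263662435022840944191408424615936000000000000000000000000000000000000000000000000000000000000000 : ℝ) * 2^257 / (159389914274848589746480029765502352759016733956694898941239901911928254399559694834974815000762445067692136565801412174122582325364055751732626590036205350327096053879189698493991817128878650274039257184242948366975817788295390297123818954418286716447352843351849485381370324880556416554279800048260739810038363946537958766353596377896596037767780929866903100499630687346667917968401350994588241152376864565438829257790686810858403842925544069399057746260511131099660672454685945888154524075145666489035101276082249018145049165725776913915264917866350391495444682732340879738330841064453125 : ℝ) with hVdef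
  have hV : (0:ℝ) < V := by rw [hVdef]; positivity
  have hsq : Real.exp ((5 * Real.log 2 - 3)/2) ^ 2 = 32 * ((Real.exp 1)^3)⁻¹ := by
    rw [sq, ← Real.exp_add,
      show (5 * Real.log 2 - 3)/2 + (5 * Real.log 2 - 3)/2 = 5 * Real.log 2 - 3 by ring,
      Real.exp_sub, show (5:ℝ) * Real.log 2 = ((5:ℕ):ℝ) * Real.log 2 by norm_num,
      Real.exp_nat_mul, Real.exp_log (by norm_num : (0:ℝ) < 2),
      show (3:ℝ) = ((3:ℕ):ℝ) * 1 by norm_num, Real.exp_nat_mul, div_eq_mul_inv]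
    norm_num
  refine lt_of_pow_lt_pow_left₀ 2 hV.le ?_
  rw [hsq]
  have he : (2.7182818283:ℝ) < Real.exp 1 := Real.exp_one_gt_d9
  have he3 : (2.7182818283:ℝ)^3 < (Real.exp 1)^3 := by
    have h0 : (0:ℝ) ≤ 2.7182818283 := by norm_num
    exact pow_lt_pow_left₀ he h0 (by norm_num)
  have h1 : (32:ℝ) * ((Real.exp 1)^3)⁻¹ < 32 * ((2.7182818283:ℝ)^3)⁻¹ := by
    have := inv_strictAnti₀ (by positivity : (0:ℝ) < (2.7182818283:ℝ)^3) he3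
    linarith
  refine h1.trans_le ?_
  rw [hVdef, div_pow, le_div_iff₀ (by positivity)]
  norm_num [pow_succ]

lemma besselBase {x : ℝ} (h1 : 3/2 ≤ x) (h2 : x ≤ 5/2) :
    Real.exp ((1 + Real.log 2)/2 + (x - 1/2) * Real.log (x - 1/2) - (x - 1/2)) < Real.Gamma x := by
  have hD1 : 0 < besselD (3/2) := by
    rw [besselD_eq (by norm_num), sub_pos]
    have hpos := besselGammaSeq_pos (by norm_num : (0:ℝ) < 3/2) 256 (by norm_num)
    have hlhs : (1 + Real.log 2)/2 + ((3:ℝ)/2 - 1/2) * Real.log ((3:ℝ)/2 - 1/2) - ((3:ℝ)/2 - 1/2)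
        = (Real.log 2 - 1)/2 := by
      rw [show (3:ℝ)/2 - 1/2 = 1 by norm_num, Real.log_one]
      ring
    rw [hlhs]
    exact (Real.lt_log_iff_exp_lt hpos).2 besselEndpoint1
  have hD2 : 0 < besselD (5/2) := by
    rw [besselD_eq (by norm_num), sub_pos]
    have hpos := besselGammaSeq_pos (by norm_num : (0:ℝ) < 5/2) 256 (by norm_num)
    have hlhs : (1 + Real.log 2)/2 + ((5:ℝ)/2 - 1/2) * Real.log ((5:ℝ)/2 - 1/2) - ((5:ℝ)/2 - 1/2)
        = (5 * Real.log 2 - 3)/2 := by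
      rw [show (5:ℝ)/2 - 1/2 = 2 by norm_num]
      ring
    rw [hlhs]
    exact (Real.lt_log_iff_exp_lt hpos).2 besselEndpoint2
  have hcomb := besselD_concave.2 (Set.mem_Icc.2 ⟨le_refl _, by norm_num⟩)
    (Set.mem_Icc.2 ⟨by norm_num, le_refl _⟩)
    (by linarith : (0:ℝ) ≤ 5/2 - x) (by linarith : (0:ℝ) ≤ x - 3/2) (by ring)
  have hx' : (5/2 - x) • ((3:ℝ)/2) + (x - 3/2) • ((5:ℝ)/2) = x := by
    rw [smul_eq_mul, smul_eq_mul]; ring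
  rw [hx', smul_eq_mul, smul_eq_mul] at hcomb
  have hm : 0 < min (besselD (3/2)) (besselD (5/2)) := lt_min hD1 hD2
  have hD : 0 < besselD x := by
    have l1 := min_le_left (besselD (3/2)) (besselD (5/2))
    have l2 := min_le_right (besselD (3/2)) (besselD (5/2))
    nlinarith [hcomb, hm, l1, l2]
  rw [besselD_eq (by linarith)] at hD
  have hGS := besselGammaSeq_pos (by linarith : (0:ℝ) < x) 256 (by norm_num)
  have hRlt : (1 + Real.log 2)/2 + (x - 1/2) * Real.log (x - 1/2) - (x - 1/2)
      < Real.log (Real.GammaSeq x 256) := by linarith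
  exact ((Real.lt_log_iff_exp_lt hGS).1 hRlt).trans_le
    (besselGammaSeq_le_Gamma (by linarith : 1 ≤ x))

lemma besselLogIneq {u : ℝ} (hu : 0 < u) : 2*u/(2+u) < Real.log (1+u) := by
  have key : StrictMonoOn (fun u : ℝ => Real.log (1+u) - 2*u/(2+u)) (Set.Ici 0) := by
    apply strictMonoOn_of_deriv_pos (convex_Ici 0)
    · apply ContinuousOn.sub
      · apply ContinuousOn.log
        · fun_prop
        · intro x hx
          simp only [Set.mem_Ici] at hx; intro h; linarith
      · apply ContinuousOn.div
        · fun_prop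
        · fun_prop
        · intro x hx
          simp only [Set.mem_Ici] at hx; intro h; linarith
    · intro x hx
      rw [interior_Ici] at hx
      simp only [Set.mem_Ioi] at hx
      have h1 : (1:ℝ) + x ≠ 0 := by linarith
      have h2 : (2:ℝ) + x ≠ 0 := by linarith
      have hd : HasDerivAt (fun u : ℝ => Real.log (1+u) - 2*u/(2+u))
          ((1+x)⁻¹ - 4/(2+x)^2) x := by
        have d1 : HasDerivAt (fun u : ℝ => Real.log (1+u)) ((1+x)⁻¹) x := by
          have := ((hasDerivAt_id x).const_add 1).log h1
          simpa using this
        have d2 : HasDerivAt (fun u : ℝ => 2*u/(2+u)) (4/(2+x)^2) x := by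
          have := (((hasDerivAt_id x).const_mul 2).div ((hasDerivAt_id x).const_add 2) h2)
          refine this.congr_deriv ?_
          simp only [id]
          field_simp
          ring
        exact d1.sub d2
      rw [hd.deriv]
      have : (2+x)^2 > 4*(1+x) := by nlinarith
      have h3 : (0:ℝ) < 1 + x := by linarith
      have h4 : (0:ℝ) < (2+x)^2 := by positivity
      rw [sub_pos, div_lt_iff₀ h4, inv_mul_eq_div, lt_div_iff₀ h3]
      nlinarith
  have h0 : (0:ℝ) ∈ Set.Ici (0:ℝ) := Set.self_mem_Ici
  have hu' : u ∈ Set.Ici (0:ℝ) := le_of_lt hu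
  have := key h0 hu' hu
  simp only [add_zero, mul_zero, zero_div, Real.log_one, sub_zero, zero_add] at this
  linarith [this]

noncomputable def besselPhi (c : ℝ) : ℝ :=
  1 + Real.log (c + 1/2) - (c+1) * Real.log (c+1) + c * Real.log c

lemma besselPhi_nonneg {c : ℝ} (hc : 1 ≤ c) : 0 ≤ besselPhi c := by
  have hanti : StrictAntiOn besselPhi (Set.Ici 1) := by
    apply strictAntiOn_of_deriv_neg (convex_Ici 1)
    · apply ContinuousOn.add
      · apply ContinuousOn.sub
        · apply ContinuousOn.add
          · fun_prop
          · apply ContinuousOn.log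
            · fun_prop
            · intro x hx; simp only [Set.mem_Ici] at hx; intro h; linarith
        · apply ContinuousOn.mul
          · fun_prop
          · apply ContinuousOn.log
            · fun_prop
            · intro x hx; simp only [Set.mem_Ici] at hx; intro h; linarith
      · apply ContinuousOn.mul
        · fun_prop
        · apply ContinuousOn.log
          · fun_prop
          · intro x hx; simp only [Set.mem_Ici] at hx; intro h; linarith
    · intro x hx
      rw [interior_Ici] at hx
      simp only [Set.mem_Ioi] at hx
      have hx0 : (0:ℝ) < x := by linarith
      have h1 : x + 1/2 ≠ 0 := by linarith
      have h2 : x + 1 ≠ 0 := by linarith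
      have hd : HasDerivAt besselPhi ((x+1/2)⁻¹ - Real.log (x+1) + Real.log x) x := by
        unfold besselPhi
        have d1 : HasDerivAt (fun c : ℝ => Real.log (c + 1/2)) ((x+1/2)⁻¹) x := by
          have := ((hasDerivAt_id x).add_const (1/2)).log h1
          simpa using this
        have d2 : HasDerivAt (fun c : ℝ => (c+1) * Real.log (c+1))
            (Real.log (x+1) + 1) x := by
          have := ((hasDerivAt_id x).add_const 1).mul (((hasDerivAt_id x).add_const 1).log h2)
          refine this.congr_deriv ?_
          simp only [id]
          field_simp
        have d3 : HasDerivAt (fun c : ℝ => c * Real.log c) (Real.log x + 1) x := by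
          have := (hasDerivAt_id x).mul (Real.hasDerivAt_log hx0.ne')
          refine this.congr_deriv ?_
          simp only [id]
          field_simp
        have := (((d1.const_add 1).sub d2).add d3)
        refine this.congr_deriv ?_
        ring
      rw [hd.deriv]
      have hlog : 2*(1/x)/(2+(1/x)) < Real.log (1+1/x) := besselLogIneq (by positivity)
      have he1 : Real.log (1+1/x) = Real.log (x+1) - Real.log x := by
        rw [show (1:ℝ)+1/x = (x+1)/x by field_simp, Real.log_div h2 hx0.ne']
      have he2 : 2*(1/x)/(2+(1/x)) = (x+1/2)⁻¹ := by
        rw [inv_eq_one_div]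
        field_simp
      rw [he1, he2] at hlog
      linarith
  have htend : Filter.Tendsto besselPhi Filter.atTop (nhds 0) := by
    have heq : besselPhi =ᶠ[Filter.atTop]
        (fun c => 1 - Real.log (1 + (1/2) * (c + 1/2)⁻¹) - c * Real.log (1 + 1/c)) := by
      filter_upwards [Filter.eventually_gt_atTop (0:ℝ)] with c hc
      have h0 : c + 1/2 ≠ 0 := by linarith
      have h1 : c + 1 ≠ 0 := by linarith
      have e1 : 1 + (1/2) * (c + 1/2)⁻¹ = (c+1)/(c+1/2) := by
        rw [inv_eq_one_div]; field_simp; ring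
      have e2 : (1:ℝ) + 1/c = (c+1)/c := by field_simp
      rw [e1, e2, Real.log_div h1 h0, Real.log_div h1 hc.ne']
      unfold besselPhi
      ring
    have hinv : Filter.Tendsto (fun c : ℝ => (c + 1/2)⁻¹) Filter.atTop (nhds 0) :=
      Filter.Tendsto.inv_tendsto_atTop (Filter.tendsto_atTop_add_const_right _ _ Filter.tendsto_id)
    have harg : Filter.Tendsto (fun c : ℝ => 1 + (1/2) * (c + 1/2)⁻¹) Filter.atTop
        (nhds (1 + (1/2) * 0)) := tendsto_const_nhds.add (hinv.const_mul _)
    have harg' : Filter.Tendsto (fun c : ℝ => 1 + (1/2) * (c + 1/2)⁻¹) Filter.atTop (nhds 1) := by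
      simpa using harg
    have hlogt : Filter.Tendsto (fun c : ℝ => Real.log (1 + (1/2) * (c + 1/2)⁻¹))
        Filter.atTop (nhds 0) := by
      have := (Real.continuousAt_log (by norm_num : (1:ℝ) ≠ 0)).tendsto.comp harg'
      simpa [Function.comp_def, Real.log_one] using this
    have hmul : Filter.Tendsto (fun c : ℝ => c * Real.log (1 + 1/c)) Filter.atTop (nhds 1) := by
      have := Real.tendsto_mul_log_one_add_div_atTop 1
      simpa using this
    have T : Filter.Tendsto
        (fun c : ℝ => 1 - Real.log (1 + (1/2) * (c + 1/2)⁻¹) - c * Real.log (1 + 1/c))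
        Filter.atTop (nhds (1 - 0 - 1)) := (tendsto_const_nhds.sub hlogt).sub hmul
    have T2 := Filter.Tendsto.congr' heq.symm T
    have h0 : (1:ℝ) - 0 - 1 = 0 := by norm_num
    rwa [h0] at T2
  have hev : ∀ᶠ x in Filter.atTop, besselPhi x ≤ besselPhi c := by
    filter_upwards [Filter.eventually_ge_atTop c] with x hx
    rcases eq_or_lt_of_le hx with rfl | hlt
    · exact le_refl _
    · exact (hanti (Set.mem_Ici.2 hc) (Set.mem_Ici.2 (hc.trans hx)) hlt).le
  exact le_of_tendsto htend hev

lemma besselStep {c : ℝ} (hc : 1 ≤ c) :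
    Real.exp ((1 + Real.log 2)/2 + (c+1) * Real.log (c+1) - (c+1))
      ≤ (c + 1/2) * Real.exp ((1 + Real.log 2)/2 + c * Real.log c - c) := by
  have hpos : (0:ℝ) < c + 1/2 := by linarith
  rw [← Real.exp_log hpos, ← Real.exp_add, Real.exp_le_exp]
  have := besselPhi_nonneg hc
  unfold besselPhi at this
  linarith

lemma besselGammaLB {c : ℝ} (hc : 1 ≤ c) :
    Real.exp ((1 + Real.log 2)/2 + c * Real.log c - c) < Real.Gamma (c + 1/2) := by
  have main : ∀ n : ℕ, ∀ c : ℝ, 1 ≤ c → c ≤ 2 →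
      Real.exp ((1 + Real.log 2)/2 + (c + n) * Real.log (c + n) - (c + n))
        < Real.Gamma ((c + n) + 1/2) := by
    intro n
    induction n with
    | zero =>
      intro c h1 h2
      have := besselBase (x := c + 1/2) (by linarith) (by linarith)
      have e1 : c + 1/2 - 1/2 = c := by ring
      rw [e1] at this
      simpa using this
    | succ n ih =>
      intro c h1 h2
      have hn0 : (0:ℝ) ≤ (n:ℝ) := Nat.cast_nonneg n
      have hcn : 1 ≤ c + n := by linarith
      have hprev := ih c h1 h2
      have hstep := besselStep (c := c + n) hcn
      push_cast
      rw [show c + ((n:ℝ)+1) = (c + (n:ℝ)) + 1 by ring,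
        show (c + (n:ℝ)) + 1 + 1/2 = ((c + (n:ℝ)) + 1/2) + 1 by ring,
        Real.Gamma_add_one (ne_of_gt (by linarith : (0:ℝ) < (c + (n:ℝ)) + 1/2))]
      exact hstep.trans_lt (mul_lt_mul_of_pos_left hprev (by linarith))

  set n : ℕ := Nat.floor (c - 1) with hn
  have h0 : (0:ℝ) ≤ c - 1 := by linarith
  have hfl : (n:ℝ) ≤ c - 1 := Nat.floor_le h0
  have hfu : c - 1 < n + 1 := Nat.lt_floor_add_one (c-1)
  have := main n (c - n) (by linarith) (by linarith)
  rw [show c - (n:ℝ) + n = c by ring] at this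
  exact this

lemma besselRatio {ν : ℝ} (hν : 0 < ν) : ∀ k : ℕ,
    (Nat.factorial (2*k) : ℝ) * Real.Gamma (ν+1) ≤ 4^k * (Nat.factorial k) * Real.Gamma (ν + k + 1) := by
  intro k
  induction k with
  | zero => simp
  | succ k ih =>
    have hΓpos : 0 < Real.Gamma (ν + k + 1) := Real.Gamma_pos_of_pos (by positivity)
    have hΓ1pos : 0 < Real.Gamma (ν + 1) := Real.Gamma_pos_of_pos (by positivity)
    have hgam : Real.Gamma (ν + (k+1:ℕ) + 1) = (ν + k + 1) * Real.Gamma (ν + k + 1) := by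
      rw [show (ν + ((k:ℕ)+1:ℕ) + 1 : ℝ) = (ν + k + 1) + 1 by push_cast; ring]
      exact Real.Gamma_add_one (by positivity : (ν + (k:ℝ) + 1 : ℝ) ≠ 0)
    have hfact : (Nat.factorial (2*(k+1)) : ℝ) = (2*k+2) * (2*k+1) * (Nat.factorial (2*k)) := by
      rw [show 2*(k+1) = (2*k+1)+1 by ring, Nat.factorial_succ, Nat.factorial_succ]
      push_cast
      ring
    have hfack : (Nat.factorial (k+1) : ℝ) = (k+1) * (Nat.factorial k) := by
      rw [Nat.factorial_succ]; push_cast; ring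
    rw [hgam, hfact, hfack]
    push_cast
    have hk0 : (0:ℝ) ≤ (k:ℝ) := Nat.cast_nonneg k
    have hkey : ((2:ℝ)*k+2) * (2*k+1) ≤ 4 * (k+1) * (ν + k + 1) := by nlinarith [hν, hk0]
    have hfpos : (0:ℝ) < (Nat.factorial (2*k) : ℝ) := by positivity
    have hfkpos : (0:ℝ) < (Nat.factorial k : ℝ) := by positivity
    have h4pos : (0:ℝ) < (4:ℝ)^k := by positivity
    calc ((2:ℝ)*k+2) * (2*k+1) * (Nat.factorial (2*k)) * Real.Gamma (ν+1)
        = ((2*k+2) * (2*k+1)) * ((Nat.factorial (2*k) : ℝ) * Real.Gamma (ν+1)) := by ring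
      _ ≤ ((2*k+2) * (2*k+1)) * (4^k * (Nat.factorial k) * Real.Gamma (ν + k + 1)) := by
          apply mul_le_mul_of_nonneg_left ih
          nlinarith [hk0]
      _ ≤ (4 * (k+1) * (ν + k + 1)) * (4^k * (Nat.factorial k) * Real.Gamma (ν + k + 1)) := by
          apply mul_le_mul_of_nonneg_right hkey
          positivity
      _ = 4^(k+1) * ((k+1) * (Nat.factorial k)) * ((ν + k + 1) * Real.Gamma (ν + k + 1)) := by
          rw [pow_succ]
          ring

theorem besselI_upper_bound (z ν : ℝ) (hz : 0 < z) (hν : 1/2 < ν) :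
    besselI ν z <
      (z / 2) ^ ν * (1 / Real.sqrt (2 * Real.exp 1)) *
        (Real.exp 1 / (ν + 1/2)) ^ (ν + 1/2) * ((Real.exp z + Real.exp (-z)) / 2) := by
  have hν0 : 0 < ν := by linarith
  set c : ℝ := ν + 1/2 with hcdef
  have hc1 : 1 ≤ c := by rw [hcdef]; linarith
  have hc0 : (0:ℝ) < c := by linarith
  set T : ℝ := Real.exp ((1 + Real.log 2)/2 + c * Real.log c - c) with hTdef
  have hT : 0 < T := Real.exp_pos _
  have hTG : T < Real.Gamma (ν + 1) := by
    have := besselGammaLB hc1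
    rw [show c + 1/2 = ν + 1 by rw [hcdef]; ring] at this
    exact this
  have hsqrt : Real.sqrt (2 * Real.exp 1) = Real.exp ((1 + Real.log 2)/2) := by
    rw [show (2:ℝ) * Real.exp 1 = Real.exp ((1 + Real.log 2)/2) ^ 2 by
      rw [sq, ← Real.exp_add, show (1 + Real.log 2)/2 + (1 + Real.log 2)/2 = 1 + Real.log 2 by ring,
        Real.exp_add, Real.exp_log (by norm_num : (0:ℝ) < 2)]; ring]
    exact Real.sqrt_sq (Real.exp_pos _).le
  have hrpow : (Real.exp 1 / c) ^ (c : ℝ) = Real.exp ((1 - Real.log c) * c) := by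
    rw [Real.rpow_def_of_pos (by positivity), Real.log_div (Real.exp_pos 1).ne' hc0.ne',
      Real.log_exp]
  have hconst : (1 / Real.sqrt (2 * Real.exp 1)) * (Real.exp 1 / c) ^ (c : ℝ) = T⁻¹ := by
    rw [hsqrt, hrpow, hTdef, one_div, ← Real.exp_neg, ← Real.exp_add, ← Real.exp_neg]
    congr 1
    ring
  have hhalf : (0:ℝ) < z/2 := by linarith
  have hΓk : ∀ k : ℕ, 0 < Real.Gamma (ν + k + 1) := fun k => Real.Gamma_pos_of_pos (by positivity)
  set g : ℕ → ℝ := fun k => ((z/2) ^ (ν : ℝ) * T⁻¹) * (z^(2*k) / (Nat.factorial (2*k))) with hgdef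
  have hsumg : Summable g := by
    apply Summable.mul_left
    have h := Real.summable_pow_div_factorial z
    have hinj : Function.Injective (fun k : ℕ => 2*k) := fun a b hab => by dsimp only at hab; omega
    exact h.comp_injective hinj
  have hfg : ∀ k : ℕ,
      (1 / (Nat.factorial k * Real.Gamma (ν + (k:ℝ) + 1))) * (z/2) ^ (ν + 2*(k:ℝ)) < g k := by
    intro k
    have hΓ := hΓk k
    have hcore : (Nat.factorial (2*k) : ℝ) * T < 4^k * (Nat.factorial k) * Real.Gamma (ν + k + 1) :=
      (mul_lt_mul_of_pos_left hTG (by positivity : (0:ℝ) < (Nat.factorial (2*k) : ℝ))).trans_le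
        (besselRatio hν0 k)
    have hsplit : (z/2) ^ (ν + 2*(k:ℝ)) = (z/2)^(ν:ℝ) * (z/2)^(2*k : ℕ) := by
      rw [Real.rpow_add hhalf, show (2*(k:ℝ)) = ((2*k : ℕ) : ℝ) by push_cast; ring,
        Real.rpow_natCast]
    have hzk : ((z/2):ℝ)^(2*k : ℕ) = z^(2*k) / 4^k := by
      rw [div_pow, show (2:ℝ)^(2*k) = 4^k by rw [pow_mul]; norm_num]
    rw [hsplit, hzk]
    have hfne : ((Nat.factorial k : ℝ)) ≠ 0 := by positivity
    have hf2ne : ((Nat.factorial (2*k) : ℝ)) ≠ 0 := by positivity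
    have h4ne : ((4:ℝ)^k) ≠ 0 := by positivity
    have e1 : (1 / ((Nat.factorial k : ℝ) * Real.Gamma (ν + k + 1)))
          * ((z/2)^(ν:ℝ) * (z^(2*k) / 4^k))
        = ((z/2)^(ν:ℝ) * z^(2*k)) * (4^k * (Nat.factorial k) * Real.Gamma (ν + k + 1))⁻¹ := by
      field_simp
    have e2 : g k = ((z/2)^(ν:ℝ) * z^(2*k)) * ((Nat.factorial (2*k) : ℝ) * T)⁻¹ := by
      simp only [hgdef]
      field_simp
    rw [e1, e2]
    apply mul_lt_mul_of_pos_left _ (by positivity)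
    exact inv_strictAnti₀ (by positivity) hcore
  have h0 : ∀ k : ℕ,
      0 ≤ (1 / (Nat.factorial k * Real.Gamma (ν + (k:ℝ) + 1))) * (z/2) ^ (ν + 2*(k:ℝ)) := by
    intro k
    apply mul_nonneg
    · apply le_of_lt
      apply div_pos one_pos
      exact mul_pos (by positivity) (hΓk k)
    · positivity
  have hlt := Summable.tsum_lt_tsum_of_nonneg h0 (fun k => (hfg k).le) (hfg 0) hsumg
  have hgsum : ∑' k, g k = ((z/2)^(ν:ℝ) * T⁻¹) * ((Real.exp z + Real.exp (-z))/2) := by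
    rw [hgdef, tsum_mul_left, ← Real.cosh_eq_tsum, Real.cosh_eq]
  have hrhs : (z/2)^(ν:ℝ) * (1/Real.sqrt (2*Real.exp 1)) * (Real.exp 1 / c)^(c:ℝ)
        * ((Real.exp z + Real.exp (-z))/2)
      = ((z/2)^(ν:ℝ) * T⁻¹) * ((Real.exp z + Real.exp (-z))/2) := by
    rw [mul_assoc ((z/2)^(ν:ℝ)), hconst]
  unfold besselI
  rw [hrhs.symm] at hgsum
  calc (∑' k : ℕ, (1 / (Nat.factorial k * Real.Gamma (ν + (k:ℝ) + 1))) * (z/2) ^ (ν + 2*(k:ℝ)))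
      < ∑' k, g k := hlt
    _ = _ := hgsum
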